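/- Let G − v be a fold of G witnessed by u, and H a graph. Define Y as the subposet of the face poset of Hom(H,G) consisting of all η such that for every x ∈ V(H), if v ∈ η(x) then u ∈ η(x). Define φ by φη(x) = η(x) ∪ {u} if v ∈ η(x) and φη(x) = η(x) otherwise. Then φ is well-defined as a map into Y (each φη satisfies the edge condition) and is an ascending closure operator on the face poset of Hom(H,G). -/

import Mathlib

open Classical in
/-- Let `G − v` be a fold of `G` witnessed by `u`, `H` a graph, and
`Y = {η : ∀ x, v ∈ η(x) → u ∈ η(x)}` inside the face poset of `Hom(H,G)`.
The map `φ` with `φη(x) = η(x) ∪ {u}` if `v ∈ η(x)` and `φη(x) = η(x)`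
otherwise is well defined as a map into `Y` and is an ascending closure
operator on the face poset of `Hom(H,G)`. -/
theorem stmt_11 {VG VH : Type*} (G : SimpleGraph VG) (H : SimpleGraph VH)
    (v u : VG) (huv : u ≠ v) (hfold : G.neighborSet v ⊆ G.neighborSet u) :
    letI S : Set (VH → Set VG) :=
      {η | (∀ x, (η x).Nonempty) ∧
        ∀ x y, H.Adj x y → ∀ a ∈ η x, ∀ b ∈ η y, G.Adj a b}
    letI Y : Set (VH → Set VG) := {η ∈ S | ∀ x, v ∈ η x → u ∈ η x}
    letI φ : (VH → Set VG) → (VH → Set VG) :=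
      fun η x => if v ∈ η x then insert u (η x) else η x
    (∀ η ∈ S, φ η ∈ Y) ∧
    (∀ η η' : VH → Set VG, η ≤ η' → φ η ≤ φ η') ∧
    (∀ η, φ (φ η) = φ η) ∧
    (∀ η, η ≤ φ η) := by
  set φ : (VH → Set VG) → (VH → Set VG) :=
    fun η x => if v ∈ η x then insert u (η x) else η x with hφ
  have hsub : ∀ η x, η x ⊆ φ η x := by
    intro η x a ha
    by_cases h : v ∈ η x <;> simp [φ, h, ha]
  have hmem : ∀ η x a, a ∈ φ η x → a ∈ η x ∨ (a = u ∧ v ∈ η x) := by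
    intro η x a ha
    by_cases h : v ∈ η x
    · simp only [φ, if_pos h, Set.mem_insert_iff] at ha
      rcases ha with rfl | ha
      · exact Or.inr ⟨rfl, h⟩
      · exact Or.inl ha
    · exact Or.inl (by simpa [φ, h] using ha)
  refine ⟨?_, ?_, ?_, fun η x => hsub η x⟩
  · rintro η ⟨hne, hadj⟩
    refine ⟨⟨fun x => (hne x).mono (hsub η x), ?_⟩, ?_⟩
    · intro x y hxy a ha b hb
      rcases hmem η x a ha with ha' | ⟨rfl, hvx⟩ <;>
        rcases hmem η y b hb with hb' | ⟨rfl, hvy⟩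
      · exact hadj x y hxy a ha' b hb'
      · exact (hfold (hadj y x hxy.symm v hvy a ha')).symm
      · exact hfold (hadj x y hxy v hvx b hb')
      · exact absurd (hadj x y hxy v hvx v hvy) (G.loopless.irrefl v)
    · intro x hv
      rcases hmem η x v hv with h | ⟨h, _⟩
      · simp [φ, h]
      · exact absurd h.symm huv
  · intro η η' h x a ha
    rcases hmem η x a ha with ha' | ⟨rfl, hvx⟩
    · exact hsub η' x (h x ha')
    · have : v ∈ η' x := h x hvx
      simp [φ, this]
  · intro η
    funext x
    by_cases h : v ∈ η x
    · have : v ∈ φ η x := hsub η x h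
      simp [φ, h, this, Set.insert_comm, Set.insert_idem]
    · simp [φ, h]
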